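/- Let N ≥ 1 and let u₁, u₂ : (Fin N → ℝ³) → ℝ³ be rotation-equivariant maps, i.e. u_k (fun i ↦ R.mulVec (X i)) = R.mulVec (u_k X) for every rotation R ∈ SO(3) and every configuration X. Fix a configuration X : Fin N → ℝ³ and define q₁(X) = u₁(X)/‖u₁(X)‖, ũ₂(X) = u₂(X) − ⟪u₂(X), q₁(X)⟫ • q₁(X), q₂(X) = ũ₂(X)/‖ũ₂(X)‖, and q₃(X) = q₁(X) ×₃ q₂(X) (vector cross product). Let Q(X) be the 3×3 real matrix whose columns are q₁(X), q₂(X), q₃(X). Assume the nondegeneracy conditions u₁(X) ≠ 0 and ũ₂(X) ≠ 0. Then for every rotation R ∈ SO(3), Q(fun i ↦ R.mulVec (X i)) = R * Q(X). -/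

import Mathlib

open Matrix
open scoped RealInnerProductSpace

/-- ℝ³ with the Euclidean inner product and norm. -/
abbrev E3 : Type := EuclideanSpace ℝ (Fin 3)

/-- First canonical axis: `q₁(X) = u₁(X) / ‖u₁(X)‖`. -/
noncomputable def qOne {N : ℕ} (u₁ : (Fin N → E3) → E3) (X : Fin N → E3) : E3 :=
  ‖u₁ X‖⁻¹ • u₁ X

/-- Gram–Schmidt residual: `ũ₂(X) = u₂(X) − ⟪u₂(X), q₁(X)⟫ • q₁(X)`. -/
noncomputable def uTwoTilde {N : ℕ} (u₁ u₂ : (Fin N → E3) → E3) (X : Fin N → E3) : E3 :=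
  u₂ X - ⟪u₂ X, qOne u₁ X⟫ • qOne u₁ X

/-- Second canonical axis: `q₂(X) = ũ₂(X) / ‖ũ₂(X)‖`. -/
noncomputable def qTwo {N : ℕ} (u₁ u₂ : (Fin N → E3) → E3) (X : Fin N → E3) : E3 :=
  ‖uTwoTilde u₁ u₂ X‖⁻¹ • uTwoTilde u₁ u₂ X

/-- Third canonical axis: `q₃(X) = q₁(X) ×₃ q₂(X)`. -/
noncomputable def qThree {N : ℕ} (u₁ u₂ : (Fin N → E3) → E3) (X : Fin N → E3) : E3 :=
  (WithLp.toLp 2 (crossProduct (qOne u₁ X) (qTwo u₁ u₂ X)) : E3)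

/-- The canonical frame `Q(X)` with columns `q₁(X), q₂(X), q₃(X)`. -/
noncomputable def Qframe {N : ℕ} (u₁ u₂ : (Fin N → E3) → E3) (X : Fin N → E3) :
    Matrix (Fin 3) (Fin 3) ℝ :=
  Matrix.of fun i j => (![qOne u₁ X, qTwo u₁ u₂ X, qThree u₁ u₂ X] j) i

lemma my_dot_inv (R : Matrix (Fin 3) (Fin 3) ℝ) (hR : Rᵀ * R = 1) (x y : Fin 3 → ℝ) :
    R.mulVec x ⬝ᵥ R.mulVec y = x ⬝ᵥ y := by
  rw [Matrix.dotProduct_mulVec, Matrix.vecMul_mulVec, hR]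
  simp [Matrix.one_mulVec]

lemma my_inner_inv (R : Matrix (Fin 3) (Fin 3) ℝ) (hR : Rᵀ * R = 1)
    (x y : EuclideanSpace ℝ (Fin 3)) :
    (@inner ℝ (EuclideanSpace ℝ (Fin 3)) _ (WithLp.toLp 2 (R.mulVec x)) (WithLp.toLp 2 (R.mulVec y))) = @inner ℝ _ _ x y := by
  have := my_dot_inv R hR x y
  simpa [PiLp.inner_apply, dotProduct, mul_comm] using this

lemma my_norm_inv (R : Matrix (Fin 3) (Fin 3) ℝ) (hR : Rᵀ * R = 1)
    (x : EuclideanSpace ℝ (Fin 3)) :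
    @norm (EuclideanSpace ℝ (Fin 3)) _ (WithLp.toLp 2 (R.mulVec x)) = ‖x‖ := by
  rw [EuclideanSpace.norm_eq, EuclideanSpace.norm_eq]
  congr 1
  have := my_dot_inv R hR x x
  simpa [dotProduct, pow_two, sq_abs] using this

lemma my_cross_inv (R : Matrix (Fin 3) (Fin 3) ℝ) (hR : Rᵀ * R = 1) (hdet : R.det = 1)
    (a b : Fin 3 → ℝ) :
    crossProduct (R.mulVec a) (R.mulVec b) = R.mulVec (crossProduct a b) := by
  have hinv : R * Rᵀ = 1 := mul_eq_one_comm.mp hR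
  funext i
  have key : ∀ c : Fin 3 → ℝ,
      crossProduct (R.mulVec a) (R.mulVec b) ⬝ᵥ R.mulVec c
        = R.mulVec (crossProduct a b) ⬝ᵥ R.mulVec c := by
    intro c
    rw [my_dot_inv R hR]
    have h1 : R.mulVec c ⬝ᵥ crossProduct (R.mulVec a) (R.mulVec b)
        = Matrix.det ![R.mulVec c, R.mulVec a, R.mulVec b] := triple_product_eq_det _ _ _
    have h2 : (c ⬝ᵥ crossProduct a b) = Matrix.det ![c, a, b] := triple_product_eq_det _ _ _
    have h3 : (Matrix.of ![R.mulVec c, R.mulVec a, R.mulVec b] : Matrix (Fin 3) (Fin 3) ℝ)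
        = Matrix.of ![c, a, b] * Rᵀ := by
      funext i j
      fin_cases i <;>
        simp [Matrix.mulVec, Matrix.mul_apply, dotProduct, mul_comm]
    rw [dotProduct_comm, h1, dotProduct_comm, h2]
    show (Matrix.of ![R.mulVec c, R.mulVec a, R.mulVec b]).det = (Matrix.of ![c, a, b]).det
    rw [h3, Matrix.det_mul, Matrix.det_transpose, hdet, mul_one]
  have := key (Rᵀ.mulVec (Pi.single i 1))
  have hRc : R.mulVec (Rᵀ.mulVec (Pi.single i 1)) = Pi.single i 1 := by
    rw [Matrix.mulVec_mulVec, hinv, Matrix.one_mulVec]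
  rw [hRc] at this
  simpa [dotProduct_single] using this

/-- **Frame equivariance.** If `u₁, u₂` are rotation-equivariant and the nondegeneracy
conditions `u₁(X) ≠ 0`, `ũ₂(X) ≠ 0` hold, then `Q(R • X) = R * Q(X)` for all `R ∈ SO(3)`. -/
theorem frame_equivariance (N : ℕ) (hN : 1 ≤ N)
    (u₁ u₂ : (Fin N → E3) → E3)
    (hu₁ : ∀ (R : Matrix (Fin 3) (Fin 3) ℝ), Rᵀ * R = 1 → R.det = 1 →
      ∀ X : Fin N → E3, u₁ (fun i => (WithLp.toLp 2 (R.mulVec (X i)) : E3)) = (WithLp.toLp 2 (R.mulVec (u₁ X)) : E3))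
    (hu₂ : ∀ (R : Matrix (Fin 3) (Fin 3) ℝ), Rᵀ * R = 1 → R.det = 1 →
      ∀ X : Fin N → E3, u₂ (fun i => (WithLp.toLp 2 (R.mulVec (X i)) : E3)) = (WithLp.toLp 2 (R.mulVec (u₂ X)) : E3))
    (X : Fin N → E3)
    (h₁ : u₁ X ≠ 0) (h₂ : uTwoTilde u₁ u₂ X ≠ 0) :
    ∀ (R : Matrix (Fin 3) (Fin 3) ℝ), Rᵀ * R = 1 → R.det = 1 →
      Qframe u₁ u₂ (fun i => (WithLp.toLp 2 (R.mulVec (X i)) : E3)) = R * Qframe u₁ u₂ X := by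
  intro R hR hdet
  set Y : Fin N → E3 := fun i => (WithLp.toLp 2 (R.mulVec (X i)) : E3) with hY
  have hq1 : qOne u₁ Y = (WithLp.toLp 2 (R.mulVec (qOne u₁ X)) : E3) := by
    unfold qOne
    rw [hY, hu₁ R hR hdet X, my_norm_inv R hR]
    ext j
    simp [Matrix.mulVec, dotProduct, Finset.mul_sum, PiLp.smul_apply, smul_eq_mul,
      mul_comm, mul_left_comm, Finset.sum_mul, mul_assoc]
  have hut : uTwoTilde u₁ u₂ Y = (WithLp.toLp 2 (R.mulVec (uTwoTilde u₁ u₂ X)) : E3) := by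
    unfold uTwoTilde
    rw [hq1, hY, hu₂ R hR hdet X, my_inner_inv R hR]
    ext j
    simp [Matrix.mulVec, dotProduct, PiLp.sub_apply, PiLp.smul_apply, smul_eq_mul,
      mul_sub, Finset.sum_sub_distrib, Finset.mul_sum, mul_comm, mul_left_comm, Finset.sum_mul, mul_assoc]
  have hq2 : qTwo u₁ u₂ Y = (WithLp.toLp 2 (R.mulVec (qTwo u₁ u₂ X)) : E3) := by
    unfold qTwo
    rw [hut, my_norm_inv R hR]
    ext j
    simp [Matrix.mulVec, dotProduct, Finset.mul_sum, PiLp.smul_apply, smul_eq_mul,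
      mul_comm, mul_left_comm, Finset.sum_mul, mul_assoc]
  have hq3 : qThree u₁ u₂ Y = (WithLp.toLp 2 (R.mulVec (qThree u₁ u₂ X)) : E3) := by
    unfold qThree
    rw [hq1, hq2]
    simp only [WithLp.ofLp_toLp]
    exact congrArg (WithLp.toLp 2) (my_cross_inv R hR hdet _ _)
  ext i j
  fin_cases j <;>
    simp [Qframe, Matrix.mul_apply, hq1, hq2, hq3, Matrix.mulVec, dotProduct]
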